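/- Crabtree–Haynsworth identity: for a psd matrix A and index set S with A(S,S) invertible, and indices i, j ∉ S, the (i,j) entry of the Schur complement A/A(S,S) := A(Sᶜ,Sᶜ) - A(Sᶜ,S)A(S,S)⁻¹A(S,Sᶜ) equals det A(S∪{i}, S∪{j}) / det A(S,S). -/

import Mathlib

open Matrix

/-- The principal submatrix `A(S,S)`. -/
def subSS {N : ℕ} (A : Matrix (Fin N) (Fin N) ℝ) (S : Finset (Fin N)) :
    Matrix {x // x ∈ S} {x // x ∈ S} ℝ :=
  A.submatrix Subtype.val Subtype.val

/-- The submatrix `A(S∪{i}, S∪{j})`, with the extra row `i` and column `j` indexed by `none`. -/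
def subExt {N : ℕ} (A : Matrix (Fin N) (Fin N) ℝ) (S : Finset (Fin N)) (i j : Fin N) :
    Matrix (Option {x // x ∈ S}) (Option {x // x ∈ S}) ℝ :=
  A.submatrix (fun x => x.elim i Subtype.val) (fun x => x.elim j Subtype.val)

/-- Crabtree–Haynsworth identity: for `i, j ∉ S`, the `(i,j)` entry of the Schur complement
`A/A(S,S)` equals `det A(S∪{i}, S∪{j}) / det A(S,S)`. -/
theorem crabtree_haynsworth {N : ℕ} (A : Matrix (Fin N) (Fin N) ℝ) (hA : A.PosSemidef)
    (S : Finset (Fin N)) (i j : Fin N) (hi : i ∉ S) (hj : j ∉ S)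
    (hdet : IsUnit (subSS A S).det) :
    A i j - ∑ a : {x // x ∈ S}, ∑ b : {x // x ∈ S},
        A i a.val * (subSS A S)⁻¹ a b * A b.val j
      = (subExt A S i j).det / (subSS A S).det := by
  set α := {x // x ∈ S}
  set B := subSS A S with hB
  haveI : Invertible B := B.invertibleOfIsUnitDet hdet
  set c : Matrix α Unit ℝ := fun a _ => A a.val j with hc
  set r : Matrix Unit α ℝ := fun _ b => A i b.val with hr
  set d : Matrix Unit Unit ℝ := fun _ _ => A i j with hd
  have hext : subExt A S i j =
      (fromBlocks B c r d).submatrix (Equiv.optionEquivSumPUnit α).symm.symm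
        (Equiv.optionEquivSumPUnit α).symm.symm := by
    ext x y
    cases x <;> cases y <;> rfl
  rw [hext, det_submatrix_equiv_self, det_fromBlocks₁₁]
  have hdd : det (d - r * ⅟B * c) = A i j - ∑ a : α, ∑ b : α,
      A i a.val * B⁻¹ a b * A b.val j := by
    rw [det_unique]
    simp only [Matrix.sub_apply, Matrix.mul_apply]
    simp only [hd, hr, hc]
    rw [invOf_eq_nonsing_inv]
    rw [Finset.sum_comm]
    simp only [Finset.sum_mul]
    rfl
  rw [hdd, mul_div_cancel_left₀ _ hdet.ne_zero]
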